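/- Let f ∈ L¹(ℝ³) and let u_f(t,x) := (t/4π) ∫_{S²} f(x + tω) dσ(ω) be the free sine wave propagator applied to f. Then for every t > 0 and every x ∈ ℝ³, the tail integral satisfies ∫_t^∞ |u_f(s,x)| ds ≤ ‖f‖_{L¹(ℝ³)}/(4π t). -/

import Mathlib

set_option autoImplicit false

open MeasureTheory ENNReal Real

noncomputable section

/-- `ℝ³` as a Euclidean space. -/
abbrev R3 : Type := EuclideanSpace ℝ (Fin 3)

/-- The surface measure on the unit sphere `S² ⊂ ℝ³`. -/
def sphereMeasure : Measure (Metric.sphere (0 : R3) 1) :=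
  (volume : Measure R3).toSphere

/-- The free sine wave propagator (Kirchhoff formula):
`u_f(t,x) = (t/4π) ∫_{S²} f(x + tω) dσ(ω)`. -/
def sinProp (f : R3 → ℂ) (t : ℝ) (x : R3) : ℂ :=
  (t / (4 * π)) • ∫ ω : Metric.sphere (0 : R3) 1, f (x + t • (ω : R3)) ∂sphereMeasure

lemma polar_lintegral (G : R3 → ℝ≥0∞) :
    ∫⁻ y, G y =
      ∫⁻ p : Metric.sphere (0 : R3) 1 × Set.Ioi (0 : ℝ),
        G ((p.2 : ℝ) • (p.1 : R3)) ∂(sphereMeasure.prod (Measure.volumeIoiPow 2)) := by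
  have e : Module.finrank ℝ R3 - 1 = 2 := by rw [finrank_euclideanSpace_fin]
  have h := (volume : Measure R3).measurePreserving_homeomorphUnitSphereProd
  rw [e] at h
  have h2 := h.lintegral_comp_emb (Homeomorph.measurableEmbedding _)
      (fun p : Metric.sphere (0 : R3) 1 × Set.Ioi (0 : ℝ) => G ((p.2 : ℝ) • (p.1 : R3)))
  rw [show ((volume : Measure R3).toSphere) = sphereMeasure from rfl] at h2
  calc ∫⁻ y, G y = ∫⁻ y in ({(0:R3)}ᶜ : Set R3), G y := by
        rw [restrict_compl_singleton]
    _ = ∫⁻ a : ({(0:R3)}ᶜ : Set R3), G a ∂(Measure.comap Subtype.val volume) :=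
        (lintegral_subtype_comap (measurableSet_singleton (0:R3)).compl _).symm
    _ = ∫⁻ a : ({(0:R3)}ᶜ : Set R3),
          G ((((homeomorphUnitSphereProd R3) a).2 : ℝ) • (((homeomorphUnitSphereProd R3) a).1 : R3))
          ∂(Measure.comap Subtype.val volume) := by
        refine lintegral_congr fun x => ?_
        have hx : (x : R3) ≠ 0 := x.2
        simp [smul_inv_smul₀ (norm_ne_zero_iff.2 hx)]
    _ = _ := h2

lemma key_lintegral (G : R3 → ℝ≥0∞) (hG : Measurable G) :
    ∫⁻ s in Set.Ioi (0:ℝ),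
        ENNReal.ofReal (s ^ 2) * ∫⁻ ω : Metric.sphere (0 : R3) 1, G (s • (ω : R3)) ∂sphereMeasure
      = ∫⁻ y, G y := by
  haveI : IsFiniteMeasure sphereMeasure := by unfold sphereMeasure; infer_instance
  have hsm : Measurable fun p : Metric.sphere (0 : R3) 1 × Set.Ioi (0 : ℝ) =>
      G ((p.2 : ℝ) • (p.1 : R3)) :=
    hG.comp ((continuous_subtype_val.comp continuous_snd).smul
      (continuous_subtype_val.comp continuous_fst)).measurable
  rw [polar_lintegral G, lintegral_prod_symm _ hsm.aemeasurable]
  have hI : Measurable fun r : Set.Ioi (0:ℝ) =>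
      ∫⁻ ω : Metric.sphere (0 : R3) 1, G ((r : ℝ) • (ω : R3)) ∂sphereMeasure :=
    Measurable.lintegral_prod_left hsm
  rw [Measure.volumeIoiPow, lintegral_withDensity_eq_lintegral_mul _
      ((measurable_subtype_coe.pow_const 2).ennreal_ofReal) hI,
    ← lintegral_subtype_comap measurableSet_Ioi
      (fun s : ℝ => ENNReal.ofReal (s ^ 2) *
        ∫⁻ ω : Metric.sphere (0 : R3) 1, G (s • (ω : R3)) ∂sphereMeasure)]
  rfl

theorem sine_tail_integral_bound (f : R3 → ℂ) (hf : Integrable f volume) :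
    ∀ t : ℝ, 0 < t → ∀ x : R3,
      ∫⁻ s in Set.Ioi t, (‖sinProp f s x‖₊ : ℝ≥0∞) ≤
        ENNReal.ofReal ((∫ y : R3, ‖f y‖) / (4 * π * t)) := by
  intro t ht x
  haveI : IsFiniteMeasure sphereMeasure := by unfold sphereMeasure; infer_instance
  have hπ : (0:ℝ) < π := Real.pi_pos
  set f' := hf.1.mk f with hf'def
  have hf's : StronglyMeasurable f' := hf.1.stronglyMeasurable_mk
  have hae : f =ᵐ[volume] f' := hf.1.ae_eq_mk
  have hnull : volume {y : R3 | ¬ f y = f' y} = 0 := hae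
  obtain ⟨N, hsN, hNmeas, hN0⟩ := exists_measurable_superset_of_null hnull
  set g : R3 → ℝ≥0∞ := fun y => (‖f' y‖₊ : ℝ≥0∞) + N.indicator (fun _ => ∞) y with hgdef
  have hg_meas : Measurable g :=
    (hf's.measurable.nnnorm.coe_nnreal_ennreal).add (measurable_const.indicator hNmeas)
  have hfg : ∀ y, (‖f y‖₊ : ℝ≥0∞) ≤ g y := by
    intro y
    by_cases hy : y ∈ N
    · simp [hgdef, Set.indicator_of_mem hy]
    · have hy2 : f y = f' y := by
        by_contra h; exact hy (hsN h)
      simp [hgdef, Set.indicator_of_notMem hy, hy2]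
  have hg_int : ∫⁻ y, g y = ENNReal.ofReal (∫ y : R3, ‖f y‖) := by
    rw [hgdef, lintegral_add_right _ (measurable_const.indicator hNmeas)]
    have h1 : ∫⁻ y, N.indicator (fun _ => (∞:ℝ≥0∞)) y ∂(volume : Measure R3) = 0 := by
      rw [lintegral_indicator hNmeas]
      simp [hN0]
    have h2 : ∫⁻ y, (‖f' y‖₊ : ℝ≥0∞) ∂(volume : Measure R3) = ∫⁻ y, (‖f y‖₊ : ℝ≥0∞) :=
      lintegral_congr_ae (hae.mono fun y hy => by simp only [hy])
    rw [h1, add_zero, h2]; exact (ofReal_integral_norm_eq_lintegral_enorm hf).symm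
  set G : R3 → ℝ≥0∞ := fun y => g (x + y) with hGdef
  have hGmeas : Measurable G := hg_meas.comp (measurable_const.add measurable_id)
  have hI : Measurable fun s : ℝ =>
      ∫⁻ ω : Metric.sphere (0 : R3) 1, G (s • (ω : R3)) ∂sphereMeasure :=
    Measurable.lintegral_prod_left
      (hGmeas.comp (continuous_snd.smul (continuous_subtype_val.comp continuous_fst)).measurable)
  have hpt : ∀ s ∈ Set.Ioi t, (‖sinProp f s x‖₊ : ℝ≥0∞) ≤
      ENNReal.ofReal (1/(4*π*t)) * (ENNReal.ofReal (s ^ 2) *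
        ∫⁻ ω : Metric.sphere (0 : R3) 1, G (s • (ω : R3)) ∂sphereMeasure) := by
    intro s hs
    have hs0 : 0 < s := ht.trans hs
    have hts : t < s := hs
    calc (‖sinProp f s x‖₊ : ℝ≥0∞)
        = (‖(s/(4*π) : ℝ)‖₊ : ℝ≥0∞) *
            ‖∫ ω : Metric.sphere (0 : R3) 1, f (x + s • (ω : R3)) ∂sphereMeasure‖₊ := by
          rw [sinProp, nnnorm_smul]; push_cast; ring
      _ ≤ ENNReal.ofReal (s/(4*π)) *
            ∫⁻ ω : Metric.sphere (0 : R3) 1, (‖f (x + s • (ω : R3))‖₊ : ℝ≥0∞) ∂sphereMeasure := by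
          rw [← enorm_eq_nnnorm, Real.enorm_eq_ofReal (by positivity)]
          exact mul_le_mul_right (enorm_integral_le_lintegral_enorm _) _
      _ ≤ (ENNReal.ofReal (1/(4*π*t)) * ENNReal.ofReal (s ^ 2)) *
            ∫⁻ ω : Metric.sphere (0 : R3) 1, G (s • (ω : R3)) ∂sphereMeasure := by
          refine mul_le_mul' ?_ (lintegral_mono fun ω => hfg _)
          rw [← ENNReal.ofReal_mul (by positivity)]
          refine ENNReal.ofReal_le_ofReal ?_
          rw [div_le_iff₀ (by positivity)]
          have h4 : 1/(4*π*t) * s ^ 2 * (4*π) = s * (s / t) := by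
            field_simp
          rw [h4]
          have : (1:ℝ) ≤ s / t := (one_le_div ht).2 hts.le
          nlinarith
      _ = _ := by rw [mul_assoc]
  calc ∫⁻ s in Set.Ioi t, (‖sinProp f s x‖₊ : ℝ≥0∞)
      ≤ ∫⁻ s in Set.Ioi t, ENNReal.ofReal (1/(4*π*t)) * (ENNReal.ofReal (s ^ 2) *
          ∫⁻ ω : Metric.sphere (0 : R3) 1, G (s • (ω : R3)) ∂sphereMeasure) :=
        setLIntegral_mono (measurable_const.mul
          ((measurable_id.pow_const 2).ennreal_ofReal.mul hI)) hpt
    _ = ENNReal.ofReal (1/(4*π*t)) * ∫⁻ s in Set.Ioi t, ENNReal.ofReal (s ^ 2) *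
          ∫⁻ ω : Metric.sphere (0 : R3) 1, G (s • (ω : R3)) ∂sphereMeasure :=
        lintegral_const_mul' _ _ ENNReal.ofReal_ne_top
    _ ≤ ENNReal.ofReal (1/(4*π*t)) * ∫⁻ s in Set.Ioi (0:ℝ), ENNReal.ofReal (s ^ 2) *
          ∫⁻ ω : Metric.sphere (0 : R3) 1, G (s • (ω : R3)) ∂sphereMeasure := by
        gcongr
    _ = ENNReal.ofReal (1/(4*π*t)) * ∫⁻ y, G y := by rw [key_lintegral G hGmeas]
    _ = ENNReal.ofReal (1/(4*π*t)) * ENNReal.ofReal (∫ y : R3, ‖f y‖) := by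
        rw [hGdef]
        rw [lintegral_add_left_eq_self g x, hg_int]
    _ = ENNReal.ofReal ((∫ y : R3, ‖f y‖) / (4 * π * t)) := by
        rw [← ENNReal.ofReal_mul (by positivity)]
        congr 1
        field_simp
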